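/- Let N ≥ 1 be an integer. Define f : [-1,1] → ℝ by f(x) = ReLU(cos(πNx)) and g : [-1,1] → ℝ by g(x) = 1/π + cos(πNx)/2. Then the relative L² aliasing error ‖f − g‖_{L²(-1,1)} / ‖f‖_{L²(-1,1)} equals (1/π)·√(π²/2 − 4). -/

import Mathlib

open Real MeasureTheory intervalIntegral

/-- Integral of `(A*cos x + B)^2` on an interval. -/
lemma integral_affine_cos_sq (A B a b : ℝ) :
    ∫ x in a..b, (A * Real.cos x + B) ^ 2 =
      A ^ 2 * ((Real.cos b * Real.sin b - Real.cos a * Real.sin a + b - a) / 2)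
        + 2 * A * B * (Real.sin b - Real.sin a) + B ^ 2 * (b - a) := by
  have h1 : ∀ x : ℝ, (A * Real.cos x + B) ^ 2
      = A ^ 2 * Real.cos x ^ 2 + (2 * A * B) * Real.cos x + B ^ 2 := by
    intro x; ring
  simp_rw [h1]
  have i1 : IntervalIntegrable (fun x => A ^ 2 * Real.cos x ^ 2) volume a b :=
    (Continuous.intervalIntegrable (by continuity) a b)
  have i2 : IntervalIntegrable (fun x => (2 * A * B) * Real.cos x) volume a b :=
    (Continuous.intervalIntegrable (by continuity) a b)
  have i3 : IntervalIntegrable (fun _ : ℝ => B ^ 2) volume a b :=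
    (Continuous.intervalIntegrable (by continuity) a b)
  rw [intervalIntegral.integral_add (i1.add i2) i3, intervalIntegral.integral_add i1 i2,
    intervalIntegral.integral_const_mul, intervalIntegral.integral_const_mul,
    integral_cos_sq, integral_cos, intervalIntegral.integral_const]
  simp only [smul_eq_mul]
  ring

/-- Change of variables + periodicity: reduce the integral of `F (cos (π N x))` on `[-1,1]`
to one period. -/
lemma reduce_to_period (F : ℝ → ℝ) (hF : Continuous F) (N : ℕ) (hN : 1 ≤ N) :
    ∫ x in (-1 : ℝ)..1, F (Real.cos (π * N * x))
      = (1 / π) * ∫ t in (-π)..π, F (Real.cos t) := by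
  have hπ : (0:ℝ) < π := Real.pi_pos
  have hN0 : (0:ℝ) < (N:ℝ) := by exact_mod_cast hN
  have hc : (π * N : ℝ) ≠ 0 := by positivity
  have hh : Continuous fun t => F (Real.cos t) := hF.comp Real.continuous_cos
  have hper : Function.Periodic (fun t => F (Real.cos t)) (2 * π) := fun t => by
    simp [Real.cos_add_two_pi]
  have hint : ∀ t₁ t₂ : ℝ, IntervalIntegrable (fun t => F (Real.cos t))
      MeasureSpace.volume t₁ t₂ := fun t₁ t₂ => hh.intervalIntegrable t₁ t₂
  have step1 : ∫ x in (-1 : ℝ)..1, F (Real.cos (π * N * x))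
      = (π * N)⁻¹ • ∫ t in (π * N * (-1))..(π * N * 1), F (Real.cos t) :=
    intervalIntegral.integral_comp_mul_left (fun t => F (Real.cos t)) hc
  have h2 : (π * N * 1 : ℝ) = π * N * (-1) + (N : ℤ) • (2 * π) := by
    simp only [zsmul_eq_mul, Int.cast_natCast]; ring
  have step2 : ∫ t in (π * N * (-1))..(π * N * 1), F (Real.cos t)
      = (N : ℤ) • ∫ t in (π * N * (-1))..(π * N * (-1) + 2 * π), F (Real.cos t) := by
    rw [h2]
    exact hper.intervalIntegral_add_zsmul_eq (N : ℤ) _ hint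
  have step3 : ∫ t in (π * N * (-1))..(π * N * (-1) + 2 * π), F (Real.cos t)
      = ∫ t in (-π)..(-π + 2 * π), F (Real.cos t) :=
    hper.intervalIntegral_add_eq _ _
  have h3 : (-π + 2 * π : ℝ) = π := by ring
  rw [step1, step2, step3, h3]
  simp only [zsmul_eq_mul, smul_eq_mul, Int.cast_natCast]
  field_simp

/-- For the rectified cosine `f x = ReLU (cos (π N x))` and its low-frequency
part `g x = 1/π + cos (π N x) / 2`, the relative L² aliasing error on `[-1, 1]` equals
`(1/π) * √(π²/2 - 4)`. -/
theorem relu_cos_aliasing_error (N : ℕ) (hN : 1 ≤ N) (f g : ℝ → ℝ)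
    (hf : ∀ x, f x = max (Real.cos (π * N * x)) 0)
    (hg : ∀ x, g x = 1 / π + Real.cos (π * N * x) / 2) :
    Real.sqrt (∫ x in (-1 : ℝ)..1, (f x - g x) ^ 2) /
      Real.sqrt (∫ x in (-1 : ℝ)..1, (f x) ^ 2) =
    (1 / π) * Real.sqrt (π ^ 2 / 2 - 4) := by
  have hπ : (0:ℝ) < π := Real.pi_pos
  -- sign of cos on the three pieces
  have hmid : ∀ t ∈ Set.uIcc (-(π/2)) (π/2), max (Real.cos t) 0 = Real.cos t := by
    intro t ht
    rw [Set.uIcc_of_le (by linarith : -(π/2) ≤ π/2)] at ht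
    exact max_eq_left (Real.cos_nonneg_of_mem_Icc ht)
  have hright : ∀ t ∈ Set.uIcc (π/2) π, max (Real.cos t) 0 = 0 := by
    intro t ht
    rw [Set.uIcc_of_le (by linarith : π/2 ≤ π)] at ht
    exact max_eq_right (Real.cos_nonpos_of_pi_div_two_le_of_le ht.1 (by linarith [ht.2]))
  have hleft : ∀ t ∈ Set.uIcc (-π) (-(π/2)), max (Real.cos t) 0 = 0 := by
    intro t ht
    rw [Set.uIcc_of_le (by linarith : -π ≤ -(π/2))] at ht
    have h := Real.cos_nonpos_of_pi_div_two_le_of_le (x := -t)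
      (by linarith [ht.2]) (by linarith [ht.1])
    rw [Real.cos_neg] at h
    exact max_eq_right h
  -- split helper
  have split : ∀ (h : ℝ → ℝ), Continuous h →
      (∫ t in (-π)..π, h t) = (∫ t in (-π)..(-(π/2)), h t)
        + (∫ t in (-(π/2))..(π/2), h t) + (∫ t in (π/2)..π, h t) := by
    intro h hc
    rw [intervalIntegral.integral_add_adjacent_intervals
        (hc.intervalIntegrable (-π) (-(π/2))) (hc.intervalIntegrable (-(π/2)) (π/2)),
      intervalIntegral.integral_add_adjacent_intervals
        (hc.intervalIntegrable (-π) (π/2)) (hc.intervalIntegrable (π/2) π)]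
  -- f and f - g as compositions
  have hfc : ∀ x, (f x) ^ 2 = (fun y => (max y 0) ^ 2) (Real.cos (π * N * x)) := by
    intro x; rw [hf x]
  have hfgc : ∀ x, (f x - g x) ^ 2
      = (fun y => (max y 0 - 1 / π - y / 2) ^ 2) (Real.cos (π * N * x)) := by
    intro x; rw [hf x, hg x]; ring
  have hcF1 : Continuous fun y : ℝ => (max y 0) ^ 2 :=
    (continuous_id.max continuous_const).pow 2
  have hcF2 : Continuous fun y : ℝ => (max y 0 - 1 / π - y / 2) ^ 2 :=
    (((continuous_id.max continuous_const).sub continuous_const).sub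
      (continuous_id.div_const 2)).pow 2
  -- compute ∫ f²
  have I1 : (∫ x in (-1 : ℝ)..1, (f x) ^ 2) = 1 / 2 := by
    have := reduce_to_period (fun y => (max y 0) ^ 2) hcF1 N hN
    simp_rw [hfc]
    rw [this, split (fun t => (max (Real.cos t) 0) ^ 2) (hcF1.comp Real.continuous_cos)]
    have e1 : (∫ t in (-π)..(-(π/2)), (max (Real.cos t) 0) ^ 2) = 0 := by
      rw [intervalIntegral.integral_congr (g := fun _ => 0)
        (fun t ht => by simp [hleft t ht])]
      simp
    have e3 : (∫ t in (π/2)..π, (max (Real.cos t) 0) ^ 2) = 0 := by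
      rw [intervalIntegral.integral_congr (g := fun _ => 0)
        (fun t ht => by simp [hright t ht])]
      simp
    have e2 : (∫ t in (-(π/2))..(π/2), (max (Real.cos t) 0) ^ 2)
        = ∫ t in (-(π/2))..(π/2), (1 * Real.cos t + 0) ^ 2 := by
      apply intervalIntegral.integral_congr
      intro t ht
      simp [hmid t ht]
    rw [e1, e3, e2, integral_affine_cos_sq]
    have s1 : Real.sin (π/2) = 1 := Real.sin_pi_div_two
    have c1 : Real.cos (π/2) = 0 := Real.cos_pi_div_two
    simp [s1, c1, Real.sin_neg, Real.cos_neg]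
    field_simp
  -- compute ∫ (f-g)²
  have I2 : (∫ x in (-1 : ℝ)..1, (f x - g x) ^ 2) = 1 / 4 - 2 / π ^ 2 := by
    have := reduce_to_period (fun y => (max y 0 - 1 / π - y / 2) ^ 2) hcF2 N hN
    simp_rw [hfgc]
    rw [this, split (fun t => (max (Real.cos t) 0 - 1 / π - Real.cos t / 2) ^ 2) (hcF2.comp Real.continuous_cos)]
    have e1 : (∫ t in (-π)..(-(π/2)), (max (Real.cos t) 0 - 1/π - Real.cos t / 2) ^ 2)
        = ∫ t in (-π)..(-(π/2)), ((-(1/2)) * Real.cos t + (-(1/π))) ^ 2 := by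
      apply intervalIntegral.integral_congr
      intro t ht
      simp only []
      rw [hleft t ht]; ring
    have e3 : (∫ t in (π/2)..π, (max (Real.cos t) 0 - 1/π - Real.cos t / 2) ^ 2)
        = ∫ t in (π/2)..π, ((-(1/2)) * Real.cos t + (-(1/π))) ^ 2 := by
      apply intervalIntegral.integral_congr
      intro t ht
      simp only []
      rw [hright t ht]; ring
    have e2 : (∫ t in (-(π/2))..(π/2), (max (Real.cos t) 0 - 1/π - Real.cos t / 2) ^ 2)
        = ∫ t in (-(π/2))..(π/2), ((1/2) * Real.cos t + (-(1/π))) ^ 2 := by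
      apply intervalIntegral.integral_congr
      intro t ht
      simp only []
      rw [hmid t ht]; ring
    rw [e1, e2, e3, integral_affine_cos_sq, integral_affine_cos_sq, integral_affine_cos_sq]
    simp [Real.sin_pi_div_two, Real.cos_pi_div_two, Real.sin_neg, Real.cos_neg,
      Real.sin_pi, Real.cos_pi]
    field_simp
    ring
  rw [I1, I2]
  -- final arithmetic with square roots
  have hP : (0:ℝ) ≤ π ^ 2 / 2 - 4 := by nlinarith [Real.pi_gt_three]
  have key : (1 / 4 - 2 / π ^ 2 : ℝ) = (1/2) * ((1/π) ^ 2 * (π ^ 2 / 2 - 4)) := by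
    field_simp; ring
  rw [key, Real.sqrt_mul (by norm_num),
    Real.sqrt_mul (by positivity) (π ^ 2 / 2 - 4), Real.sqrt_sq (by positivity : (0:ℝ) ≤ 1/π)]
  rw [mul_comm (Real.sqrt (1/2)) _, mul_assoc, mul_div_assoc]
  rw [mul_div_assoc]
  rw [div_self (by positivity : Real.sqrt ((1:ℝ)/2) ≠ 0), mul_one]
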